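/- Let P ∈ ℝ^{n×n} be symmetric positive semidefinite with Moore–Penrose pseudoinverse P⁺, and let X̃ = {x ∈ ℝⁿ : ⟨Px, x⟩ ≤ 1}. Then for ℓ ∈ ℝⁿ, the support function satisfies c(X̃, ℓ) = ⟨P⁺ℓ, ℓ⟩^{1/2} if P⁺Pℓ = ℓ (i.e. ℓ ∈ range P), and c(X̃, ℓ) = +∞ otherwise. -/

import Mathlib

open Matrix

private lemma dp_shift {n : ℕ} (A : Matrix (Fin n) (Fin n) ℝ) (a b : Fin n → ℝ) :
    a ⬝ᵥ (A *ᵥ b) = (Aᵀ *ᵥ a) ⬝ᵥ b := by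
  rw [Matrix.dotProduct_mulVec, Matrix.mulVec_transpose]

theorem stmt10 {n : ℕ} (P Pp : Matrix (Fin n) (Fin n) ℝ) (hP : P.PosSemidef)
    (pen1 : P * Pp * P = P) (pen2 : Pp * P * Pp = Pp)
    (pen3 : (P * Pp)ᵀ = P * Pp) (pen4 : (Pp * P)ᵀ = Pp * P)
    (ℓ : Fin n → ℝ) :
    ((Pp * P) *ᵥ ℓ = ℓ →
      BddAbove ((fun x => ℓ ⬝ᵥ x) '' {x : Fin n → ℝ | x ⬝ᵥ (P *ᵥ x) ≤ 1}) ∧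
      sSup ((fun x => ℓ ⬝ᵥ x) '' {x : Fin n → ℝ | x ⬝ᵥ (P *ᵥ x) ≤ 1})
        = Real.sqrt (ℓ ⬝ᵥ (Pp *ᵥ ℓ))) ∧
    ((Pp * P) *ᵥ ℓ ≠ ℓ →
      ¬ BddAbove ((fun x => ℓ ⬝ᵥ x) '' {x : Fin n → ℝ | x ⬝ᵥ (P *ᵥ x) ≤ 1})) := by
  -- nonnegativity of the quadratic form
  have hpos : ∀ x : Fin n → ℝ, 0 ≤ x ⬝ᵥ (P *ᵥ x) := by
    intro x
    have := hP.dotProduct_mulVec_nonneg x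
    simpa using this
  -- symmetry of the quadratic form
  have hPT : Pᵀ = P := by
    have := hP.1
    simpa [Matrix.IsHermitian, Matrix.conjTranspose_eq_transpose_of_trivial] using this
  have hsym : ∀ a b : Fin n → ℝ, a ⬝ᵥ (P *ᵥ b) = b ⬝ᵥ (P *ᵥ a) := by
    intro a b
    rw [dp_shift, hPT, dotProduct_comm]
  -- Cauchy–Schwarz for the semidefinite form
  have hCS : ∀ a b : Fin n → ℝ,
      (a ⬝ᵥ (P *ᵥ b)) ^ 2 ≤ (a ⬝ᵥ (P *ᵥ a)) * (b ⬝ᵥ (P *ᵥ b)) := by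
    intro a b
    have hq : ∀ t : ℝ, 0 ≤ (a ⬝ᵥ (P *ᵥ a)) * (t * t)
        + (2 * (a ⬝ᵥ (P *ᵥ b))) * t + (b ⬝ᵥ (P *ᵥ b)) := by
      intro t
      have h0 := hpos (b + t • a)
      have hexp : (b + t • a) ⬝ᵥ (P *ᵥ (b + t • a))
          = (a ⬝ᵥ (P *ᵥ a)) * (t * t)
            + (2 * (a ⬝ᵥ (P *ᵥ b))) * t + (b ⬝ᵥ (P *ᵥ b)) := by
        rw [Matrix.mulVec_add, Matrix.mulVec_smul, dotProduct_add, add_dotProduct,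
          add_dotProduct, smul_dotProduct, smul_dotProduct, dotProduct_smul,
          dotProduct_smul, hsym b a]
        simp only [smul_eq_mul]
        ring
      linarith [hexp ▸ h0]
    have hd := discrim_le_zero hq
    rw [discrim] at hd
    nlinarith [hd]
  constructor
  · -- the bounded case
    intro h
    set u : Fin n → ℝ := Ppᵀ *ᵥ ℓ with hu
    have huPx : ∀ x : Fin n → ℝ, ℓ ⬝ᵥ x = u ⬝ᵥ (P *ᵥ x) := by
      intro x
      calc ℓ ⬝ᵥ x = ((Pp * P) *ᵥ ℓ) ⬝ᵥ x := by rw [h]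
        _ = ℓ ⬝ᵥ ((Pp * P)ᵀ *ᵥ x) := by rw [dp_shift, Matrix.transpose_transpose]
        _ = ℓ ⬝ᵥ (Pp *ᵥ (P *ᵥ x)) := by rw [pen4, Matrix.mulVec_mulVec]
        _ = u ⬝ᵥ (P *ᵥ x) := by rw [dp_shift, hu]
    have huPu : u ⬝ᵥ (P *ᵥ u) = ℓ ⬝ᵥ (Pp *ᵥ ℓ) := by
      have h1 : ℓ ⬝ᵥ u = u ⬝ᵥ (P *ᵥ u) := huPx u
      have h2 : ℓ ⬝ᵥ u = ℓ ⬝ᵥ (Pp *ᵥ ℓ) := by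
        rw [hu, dp_shift, Matrix.transpose_transpose, dotProduct_comm]
      rw [← h1, h2]
    set t : ℝ := Real.sqrt (ℓ ⬝ᵥ (Pp *ᵥ ℓ)) with ht
    have hPpl : 0 ≤ ℓ ⬝ᵥ (Pp *ᵥ ℓ) := huPu ▸ hpos u
    have ht2 : t ^ 2 = ℓ ⬝ᵥ (Pp *ᵥ ℓ) := Real.sq_sqrt hPpl
    have htnn : 0 ≤ t := Real.sqrt_nonneg _
    -- t is an upper bound
    have hub : ∀ y ∈ (fun x => ℓ ⬝ᵥ x) '' {x : Fin n → ℝ | x ⬝ᵥ (P *ᵥ x) ≤ 1},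
        y ≤ t := by
      rintro y ⟨x, hx, rfl⟩
      have h1 : (u ⬝ᵥ (P *ᵥ x)) ^ 2 ≤ (u ⬝ᵥ (P *ᵥ u)) * (x ⬝ᵥ (P *ᵥ x)) := hCS u x
      have hx' : x ⬝ᵥ (P *ᵥ x) ≤ 1 := hx
      have h2 : (ℓ ⬝ᵥ x) ^ 2 ≤ t ^ 2 := by
        rw [huPx x, ht2, ← huPu]
        nlinarith [h1, hpos x, hpos u, hx']
      nlinarith [h2, htnn]
    have hBdd : BddAbove ((fun x => ℓ ⬝ᵥ x) '' {x : Fin n → ℝ | x ⬝ᵥ (P *ᵥ x) ≤ 1}) :=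
      ⟨t, hub⟩
    refine ⟨hBdd, ?_⟩
    -- t is attained
    have hmem : t ∈ (fun x => ℓ ⬝ᵥ x) '' {x : Fin n → ℝ | x ⬝ᵥ (P *ᵥ x) ≤ 1} := by
      rcases eq_or_lt_of_le hPpl with h0 | h0
      · refine ⟨0, by simp [Set.mem_setOf_eq], ?_⟩
        simp [ht, ← h0]
      · have htpos : 0 < t := Real.sqrt_pos.mpr h0
        refine ⟨t⁻¹ • u, ?_, ?_⟩
        · show (t⁻¹ • u) ⬝ᵥ (P *ᵥ (t⁻¹ • u)) ≤ 1
          rw [Matrix.mulVec_smul, dotProduct_smul, smul_dotProduct, huPu, ← ht2]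
          rw [smul_eq_mul, smul_eq_mul]
          have hne' : t ≠ 0 := ne_of_gt htpos
          have heq : t⁻¹ * (t⁻¹ * t ^ 2) = 1 := by
            field_simp [pow_two]
          rw [heq]
        · show ℓ ⬝ᵥ (t⁻¹ • u) = t
          rw [dotProduct_smul, smul_eq_mul, huPx u, huPu, ← ht2]
          field_simp
    exact IsGreatest.csSup_eq ⟨hmem, hub⟩
  · -- the unbounded case
    intro hne hBdd
    obtain ⟨b, hb⟩ := hBdd
    set v : Fin n → ℝ := ℓ - (Pp * P) *ᵥ ℓ with hv
    have hvne : v ≠ 0 := by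
      rw [hv, sub_ne_zero]
      exact fun hc => hne hc.symm
    have hPv : P *ᵥ v = 0 := by
      rw [hv, Matrix.mulVec_sub, Matrix.mulVec_mulVec, ← Matrix.mul_assoc, pen1, sub_self]
    have hvv : 0 < v ⬝ᵥ v := by
      rcases lt_or_eq_of_le (Finset.sum_nonneg fun i _ => mul_self_nonneg (v i)) with h | h
      · exact h
      · exact absurd (dotProduct_self_eq_zero.mp h.symm) hvne
    have hlv : ℓ ⬝ᵥ v = v ⬝ᵥ v := by
      have h1 : ((Pp * P) *ᵥ ℓ) ⬝ᵥ v = 0 := by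
        rw [dotProduct_comm, dp_shift, pen4, ← Matrix.mulVec_mulVec, hPv]
        simp
      calc ℓ ⬝ᵥ v = ℓ ⬝ᵥ v - ((Pp * P) *ᵥ ℓ) ⬝ᵥ v := by rw [h1, sub_zero]
        _ = v ⬝ᵥ v := by rw [hv, sub_dotProduct]
    -- the scaled vector gives value b + 1
    set c : ℝ := (b + 1) / (v ⬝ᵥ v) with hc
    have hmem : (b + 1) ∈ (fun x => ℓ ⬝ᵥ x) '' {x : Fin n → ℝ | x ⬝ᵥ (P *ᵥ x) ≤ 1} := by
      refine ⟨c • v, ?_, ?_⟩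
      · show (c • v) ⬝ᵥ (P *ᵥ (c • v)) ≤ 1
        rw [Matrix.mulVec_smul, hPv]
        simp
      · show ℓ ⬝ᵥ (c • v) = b + 1
        rw [dotProduct_smul, smul_eq_mul, hlv, hc]
        field_simp
    have := hb hmem
    linarith
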